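/- arXiv:2012.00939 — 4 statements merged into one kernel-verified Lean document; each statement's English description precedes it below -/
import Mathlib

section
/- (Kaplansky) Let R be a ring and P a projective R-module. Then there exists a family of submodules (N_i)_{i ∈ ι} of P such that the family is independent, its supremum is all of P (so P is the internal direct sum of the N_i), and each N_i is countably generated (it is the span of a countable subset) and is itself a projective R-module. -/
set_option linter.unusedSectionVars false
universe u v
namespace KapAux
variable {R : Type u} [Ring R] {X : Type v}

noncomputable def piS (S : Set X) : (X →₀ R) →ₗ[R] (X →₀ R) :=
  haveI := Classical.decPred (· ∈ S)
  { toFun := Finsupp.filter (· ∈ S)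
    map_add' := fun _ _ => Finsupp.filter_add
    map_smul' := fun _ _ => Finsupp.filter_smul }

lemma piS_apply (S : Set X) (x : X →₀ R) :
    piS S x = haveI := Classical.decPred (· ∈ S); x.filter (· ∈ S) := rfl

lemma piS_eq_self {S : Set X} {x : X →₀ R} (h : (x.support : Set X) ⊆ S) :
    piS S x = x := by
  classical
  rw [piS_apply]
  exact (Finsupp.filter_eq_self_iff _ _).mpr fun a ha => h (Finsupp.mem_support_iff.mpr ha)

lemma piS_mem_supported (S : Set X) (x : X →₀ R) :
    piS S x ∈ Finsupp.supported R R S := by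
  rw [piS_apply, Finsupp.mem_supported]
  intro a ha
  classical
  rw [Finset.mem_coe, Finsupp.support_filter, Finset.mem_filter] at ha
  exact ha.2

/-- A set of indices is *good* if the span of its basis vectors is `e`-invariant. -/
def IsGood (e : (X →₀ R) →ₗ[R] (X →₀ R)) (S : Set X) : Prop :=
  ∀ i ∈ S, e (Finsupp.single i 1) ∈ Finsupp.supported R R S

lemma IsGood.map_mem {e : (X →₀ R) →ₗ[R] (X →₀ R)} {S : Set X} (hS : IsGood e S)
    {x : X →₀ R} (hx : x ∈ Finsupp.supported R R S) : e x ∈ Finsupp.supported R R S := by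
  have h : Submodule.span R ((fun i => Finsupp.single i (1 : R)) '' S) ≤
      Submodule.comap e (Finsupp.supported R R S) := by
    rw [Submodule.span_le]
    rintro - ⟨i, hi, rfl⟩
    exact hS i hi
  have hx' : x ∈ Submodule.span R ((fun i => Finsupp.single i (1 : R)) '' S) := by
    rwa [← Finsupp.supported_eq_span_single]
  exact h hx'

lemma IsGood.iUnion {e : (X →₀ R) →ₗ[R] (X →₀ R)} {κ : Sort*} {S : κ → Set X}
    (hS : ∀ t, IsGood e (S t)) : IsGood e (⋃ t, S t) := by
  rintro i hi
  obtain ⟨t, ht⟩ := Set.mem_iUnion.mp hi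
  exact Finsupp.supported_mono (Set.subset_iUnion S t) (hS t i ht)

lemma IsGood.union {e : (X →₀ R) →ₗ[R] (X →₀ R)} {S T : Set X}
    (hS : IsGood e S) (hT : IsGood e T) : IsGood e (S ∪ T) := by
  rintro i (hi | hi)
  · exact Finsupp.supported_mono Set.subset_union_left (hS i hi)
  · exact Finsupp.supported_mono Set.subset_union_right (hT i hi)

/-- countable closure lemma -/
lemma exists_countable_good (e : (X →₀ R) →ₗ[R] (X →₀ R)) (j : X) :
    ∃ C : Set X, j ∈ C ∧ C.Countable ∧ IsGood e C := by
  classical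
  let g : X → Set X := fun i => ↑(e (Finsupp.single i 1)).support
  have hg : ∀ i, (g i).Countable := fun i => (Finset.finite_toSet _).countable
  let T : ℕ → Set X := fun n => Nat.rec ({j} : Set X) (fun _ Tn => Tn ∪ ⋃ i ∈ Tn, g i) n
  have hTc : ∀ n, (T n).Countable := by
    intro n
    induction n with
    | zero => exact Set.countable_singleton j
    | succ n ih => exact ih.union (Set.Countable.biUnion ih fun i _ => hg i)
  have hTmono : ∀ n, T n ⊆ T (n + 1) := fun n => Set.subset_union_left
  refine ⟨⋃ n, T n, Set.mem_iUnion.mpr ⟨0, rfl⟩, Set.countable_iUnion hTc, ?_⟩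
  intro i hi
  obtain ⟨n, hn⟩ := Set.mem_iUnion.mp hi
  rw [Finsupp.mem_supported]
  refine subset_trans ?_ (Set.subset_iUnion T (n + 1))
  intro a ha
  exact Set.mem_union_right _ (Set.mem_biUnion hn ha)


section
variable [LinearOrder X] (e : (X →₀ R) →ₗ[R] (X →₀ R)) (Cs : X → Set X)

def Aset (j : X) : Set X := ⋃ k ∈ Set.Iio j, Cs k
def Bset (j : X) : Set X := Aset Cs j ∪ Cs j

variable {Cs} in
lemma Cs_subset_Bset {k m : X} (h : k ≤ m) : Cs k ⊆ Bset Cs m := by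
  rcases eq_or_lt_of_le h with rfl | h
  · exact Set.subset_union_right
  · exact subset_trans (Set.subset_biUnion_of_mem (show k ∈ Set.Iio m from h))
      Set.subset_union_left

variable {Cs} in
lemma Bset_subset_Aset {k j : X} (h : k < j) : Bset Cs k ⊆ Aset Cs j := by
  rintro i (hi | hi)
  · obtain ⟨t, ht⟩ := Set.mem_iUnion.mp hi
    obtain ⟨htk, hit⟩ := Set.mem_iUnion.mp ht
    exact Set.mem_biUnion (show t ∈ Set.Iio j from lt_trans (Set.mem_Iio.mp htk) h) hit
  · exact Set.mem_biUnion (show k ∈ Set.Iio j from h) hi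

variable {e Cs} in
lemma isGood_Aset (hgood : ∀ k, IsGood e (Cs k)) (j : X) : IsGood e (Aset Cs j) := by
  have : Aset Cs j = ⋃ k : Set.Iio j, Cs k := by
    rw [Set.iUnion_coe_set]; rfl
  rw [this]
  exact IsGood.iUnion fun t => hgood t

variable {e Cs} in
lemma isGood_Bset (hgood : ∀ k, IsGood e (Cs k)) (j : X) : IsGood e (Bset Cs j) :=
  (isGood_Aset hgood j).union (hgood j)

/-- the canonical projection of `F_{B j} ∩ P` killing `F_{A j} ∩ P` -/
noncomputable def rmap (j : X) : (X →₀ R) →ₗ[R] (X →₀ R) := e ∘ₗ piS (Aset Cs j)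

/-- the `j`-th piece of the decomposition. -/
noncomputable def Nmod (j : X) : Submodule R (X →₀ R) :=
  (LinearMap.range e ⊓ Finsupp.supported R R (Bset Cs j)) ⊓ LinearMap.ker (rmap e Cs j)

/-- the projection of `F` onto `Nmod j`. -/
noncomputable def umap (j : X) : (X →₀ R) →ₗ[R] (X →₀ R) :=
  (LinearMap.id - e ∘ₗ piS (Aset Cs j)) ∘ₗ e ∘ₗ piS (Bset Cs j)

variable {e} in
lemma mem_range_iff (he : ∀ x, e (e x) = e x) {x : X →₀ R} :
    x ∈ LinearMap.range e ↔ e x = x := by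
  constructor
  · rintro ⟨y, rfl⟩; exact he y
  · intro h; exact ⟨x, h⟩

variable {e Cs} in
lemma rmap_fix {j : X} {x : X →₀ R} (hx1 : e x = x)
    (hx2 : x ∈ Finsupp.supported R R (Aset Cs j)) : rmap e Cs j x = x := by
  rw [rmap, LinearMap.comp_apply, piS_eq_self (Finsupp.mem_supported _ _ |>.mp hx2), hx1]

variable {e Cs} in
lemma rmap_mem (hgood : ∀ k, IsGood e (Cs k)) (j : X) (x : X →₀ R) :
    rmap e Cs j x ∈ LinearMap.range e ⊓ Finsupp.supported R R (Aset Cs j) := by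
  refine ⟨⟨_, rfl⟩, ?_⟩
  exact (isGood_Aset hgood j).map_mem (piS_mem_supported _ _)

variable {e Cs} in
lemma mem_Nmod_iff {j : X} {x : X →₀ R} (he : ∀ x, e (e x) = e x) :
    x ∈ Nmod e Cs j ↔ e x = x ∧ x ∈ Finsupp.supported R R (Bset Cs j) ∧ rmap e Cs j x = 0 := by
  simp only [Nmod, Submodule.mem_inf, LinearMap.mem_ker, mem_range_iff he, and_assoc]

variable {e Cs} in
lemma umap_mem (he : ∀ x, e (e x) = e x) (hgood : ∀ k, IsGood e (Cs k)) (j : X) (x : X →₀ R) :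
    umap e Cs j x ∈ Nmod e Cs j := by
  have hz0 : umap e Cs j x = e (piS (Bset Cs j) x) - rmap e Cs j (e (piS (Bset Cs j) x)) := by
    simp [umap, rmap, LinearMap.sub_apply, LinearMap.comp_apply]
  set z := e (piS (Bset Cs j) x) with hzdef
  set w := rmap e Cs j z with hwdef
  have hez : e z = z := he _
  have hzB : z ∈ Finsupp.supported R R (Bset Cs j) :=
    (isGood_Bset hgood j).map_mem (piS_mem_supported _ _)
  obtain ⟨hwr, hwA⟩ := rmap_mem hgood j z
  have hew : e w = w := (mem_range_iff he).mp hwr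
  have hwfix : rmap e Cs j w = w := rmap_fix hew hwA
  rw [mem_Nmod_iff he, hz0]
  refine ⟨?_, ?_, ?_⟩
  · rw [map_sub, hez, hew]
  · exact Submodule.sub_mem _ hzB (Finsupp.supported_mono Set.subset_union_left hwA)
  · rw [map_sub, ← hwdef, hwfix, sub_self]

variable {e Cs} in
lemma umap_fix (he : ∀ x, e (e x) = e x) {j : X} {x : X →₀ R} (hx : x ∈ Nmod e Cs j) :
    umap e Cs j x = x := by
  obtain ⟨hx1, hx2, hx3⟩ := (mem_Nmod_iff he).mp hx
  have : piS (Bset Cs j) x = x := piS_eq_self ((Finsupp.mem_supported _ _).mp hx2)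
  simp only [umap, LinearMap.comp_apply, this, hx1, LinearMap.sub_apply, LinearMap.id_apply]
  have : e (piS (Aset Cs j) x) = 0 := hx3
  rw [this, sub_zero]


variable {e Cs} in
lemma Nmod_projective (he : ∀ x, e (e x) = e x) (hgood : ∀ k, IsGood e (Cs k)) (j : X) :
    Module.Projective R (Nmod e Cs j) :=
  Module.Projective.of_split (M := X →₀ R) (Nmod e Cs j).subtype
    (LinearMap.codRestrict (Nmod e Cs j) (umap e Cs j) (umap_mem he hgood j))
    (LinearMap.ext fun x => Subtype.ext (umap_fix he x.2))

variable {e Cs} in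
lemma umap_single_eq_zero (he : ∀ x, e (e x) = e x) (hgood : ∀ k, IsGood e (Cs k))
    {j i : X} (hi : i ∈ Aset Cs j) : umap e Cs j (Finsupp.single i (1 : R)) = 0 := by
  have hsingle : ((Finsupp.single i (1 : R)).support : Set X) ⊆ Bset Cs j := by
    intro a ha
    have : a = i := Finset.mem_singleton.mp (Finsupp.support_single_subset ha)
    subst this
    exact Set.mem_union_left _ hi
  have h2 : e (Finsupp.single i (1 : R)) ∈ Finsupp.supported R R (Aset Cs j) :=
    isGood_Aset hgood j i hi
  have h3 : e (e (Finsupp.single i (1 : R))) = e (Finsupp.single i (1 : R)) := he _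
  simp only [umap, LinearMap.comp_apply, piS_eq_self hsingle, LinearMap.sub_apply,
    LinearMap.id_apply]
  have : rmap e Cs j (e (Finsupp.single i (1 : R))) = e (Finsupp.single i (1 : R)) :=
    rmap_fix h3 h2
  rw [show e (piS (Aset Cs j) (e (Finsupp.single i (1:R)))) =
    rmap e Cs j (e (Finsupp.single i (1:R))) from rfl, this, sub_self]

variable {e Cs} in
lemma Nmod_span (he : ∀ x, e (e x) = e x) (hgood : ∀ k, IsGood e (Cs k)) (j : X) :
    Submodule.span R ((fun i => umap e Cs j (Finsupp.single i (1 : R))) '' Cs j)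
      = Nmod e Cs j := by
  apply le_antisymm
  · rw [Submodule.span_le]
    rintro - ⟨i, _, rfl⟩
    exact umap_mem he hgood j _
  · intro x hx
    have hx2 : x ∈ Finsupp.supported R R (Bset Cs j) := ((mem_Nmod_iff he).mp hx).2.1
    rw [Finsupp.supported_eq_span_single] at hx2
    have hxu : x = umap e Cs j x := (umap_fix he hx).symm
    rw [hxu]
    have : umap e Cs j x ∈ Submodule.map (umap e Cs j)
        (Submodule.span R ((fun i => Finsupp.single i (1 : R)) '' Bset Cs j)) :=
      ⟨x, hx2, rfl⟩
    rw [Submodule.map_span] at this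
    refine Submodule.span_le.mpr ?_ this
    rintro - ⟨-, ⟨i, hiB, rfl⟩, rfl⟩
    rcases hiB with hiA | hiC
    · rw [umap_single_eq_zero he hgood hiA]
      exact Submodule.zero_mem _
    · exact Submodule.subset_span ⟨i, hiC, rfl⟩

variable {e Cs} in
lemma sum_eq_zero (he : ∀ x, e (e x) = e x) (g : X →₀ (X →₀ R))
    (hg : ∀ k, g k ∈ Nmod e Cs k) (hs : (g.sum fun _ v => v) = 0) : g = 0 := by
  by_contra hne
  have hsupp : g.support.Nonempty := Finsupp.support_nonempty_iff.mpr hne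
  set m := g.support.max' hsupp with hmdef
  have hm : m ∈ g.support := Finset.max'_mem _ _
  have h0 : (∑ k ∈ g.support, rmap e Cs m (g k)) = 0 := by
    have := congrArg (rmap e Cs m) hs
    rw [map_finsuppSum, map_zero] at this
    exact this
  have hterm : ∀ k ∈ g.support.erase m, rmap e Cs m (g k) = g k := by
    intro k hk
    have hkm : k < m := lt_of_le_of_ne
      (Finset.le_max' _ _ (Finset.mem_of_mem_erase hk)) (Finset.ne_of_mem_erase hk)
    obtain ⟨h1, h2, _⟩ := (mem_Nmod_iff he).mp (hg k)
    exact rmap_fix h1 (Finsupp.supported_mono (Bset_subset_Aset hkm) h2)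
  have hrm : rmap e Cs m (g m) = 0 := ((mem_Nmod_iff he).mp (hg m)).2.2
  rw [← Finset.add_sum_erase _ _ hm, hrm, zero_add, Finset.sum_congr rfl hterm] at h0
  have hsum : (∑ k ∈ g.support, g k) = 0 := hs
  rw [← Finset.add_sum_erase _ _ hm, h0, add_zero] at hsum
  exact (Finsupp.mem_support_iff.mp hm) hsum

variable {e Cs} in
lemma Nmod_indep (he : ∀ x, e (e x) = e x) : iSupIndep (Nmod e Cs) := by
  intro j
  rw [Submodule.disjoint_def]
  intro x hxj hxs
  rw [iSup_subtype', Submodule.mem_iSup_iff_exists_finsupp] at hxs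
  obtain ⟨f, hf, hsum⟩ := hxs
  classical
  set emb : {k // k ≠ j} ↪ X := ⟨Subtype.val, Subtype.val_injective⟩ with hembdef
  set g : X →₀ (X →₀ R) := Finsupp.embDomain emb f + Finsupp.single j (-x) with hgdef
  have hgj : g j = -x := by
    rw [hgdef, Finsupp.add_apply, Finsupp.single_eq_same,
      Finsupp.embDomain_notin_range _ _ _ (by rintro ⟨⟨k, hk⟩, hk2⟩; exact hk hk2), zero_add]
  have hg : ∀ k, g k ∈ Nmod e Cs k := by
    intro k
    by_cases hk : k = j
    · subst hk; rw [hgj]; exact Submodule.neg_mem _ hxj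
    · have h1 : g k = f ⟨k, hk⟩ := by
        rw [hgdef, Finsupp.add_apply, Finsupp.single_eq_of_ne' (Ne.symm hk), add_zero]
        exact Finsupp.embDomain_apply_self emb f ⟨k, hk⟩
      rw [h1]
      exact hf ⟨k, hk⟩
  have hgs : (g.sum fun _ v => v) = 0 := by
    rw [hgdef, Finsupp.sum_add_index' (fun _ => rfl) (fun _ _ _ => rfl),
      Finsupp.sum_embDomain, Finsupp.sum_single_index rfl, hsum, add_neg_cancel]
  have := sum_eq_zero he g hg hgs
  rw [this, Finsupp.coe_zero, Pi.zero_apply] at hgj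
  exact neg_eq_zero.mp hgj.symm

variable {e Cs} in
lemma Nmod_sup [WellFoundedLT X] (he : ∀ x, e (e x) = e x) (hmem : ∀ j, j ∈ Cs j)
    (hgood : ∀ k, IsGood e (Cs k)) : iSup (Nmod e Cs) = LinearMap.range e := by
  apply le_antisymm (iSup_le fun j => le_trans inf_le_left inf_le_left)
  have hsub : ∀ (y : X →₀ R) (gg : X → X), (∀ i ∈ y.support, i ∈ Cs (gg i)) →
      y.support.Nonempty →
      ∃ m ∈ y.support.image gg, y ∈ Finsupp.supported R R (Bset Cs m) := by
    intro y gg hgg hne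
    have hne' : (y.support.image gg).Nonempty := hne.image gg
    refine ⟨(y.support.image gg).max' hne', Finset.max'_mem _ _, ?_⟩
    rw [Finsupp.mem_supported]
    intro i hi
    have hi' : i ∈ y.support := hi
    exact Cs_subset_Bset (Finset.le_max' _ _ (Finset.mem_image_of_mem gg hi')) (hgg i hi')
  have key : ∀ j : X, ∀ x : X →₀ R, e x = x →
      x ∈ Finsupp.supported R R (Bset Cs j) → x ∈ iSup (Nmod e Cs) := by
    intro j
    refine WellFoundedLT.induction
      (motive := fun j => ∀ x : X →₀ R, e x = x →
        x ∈ Finsupp.supported R R (Bset Cs j) → x ∈ iSup (Nmod e Cs)) j ?_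
    intro j IH x hx1 hx2
    obtain ⟨hrr, hrA⟩ := rmap_mem hgood j x
    have her : e (rmap e Cs j x) = rmap e Cs j x := (mem_range_iff he).mp hrr
    have hxN : x - rmap e Cs j x ∈ Nmod e Cs j := by
      rw [mem_Nmod_iff he]
      refine ⟨by rw [map_sub, hx1, her], ?_, ?_⟩
      · exact Submodule.sub_mem _ hx2 (Finsupp.supported_mono Set.subset_union_left hrA)
      · rw [map_sub, rmap_fix her hrA, sub_self]
    have hdec : x = (x - rmap e Cs j x) + rmap e Cs j x := (sub_add_cancel x _).symm
    by_cases h0 : rmap e Cs j x = 0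
    · rw [h0, sub_zero] at hxN
      exact le_iSup (Nmod e Cs) j hxN
    · have hne : (rmap e Cs j x).support.Nonempty := Finsupp.support_nonempty_iff.mpr h0
      classical
      have hchoice : ∀ i ∈ (rmap e Cs j x).support, ∃ k, k < j ∧ i ∈ Cs k := by
        intro i hi
        have hiA : (i : X) ∈ Aset Cs j := (Finsupp.mem_supported _ _).mp hrA hi
        simpa [Aset, Set.mem_iUnion] using hiA
      set gg : X → X := fun i => if h : ∃ k, k < j ∧ i ∈ Cs k then h.choose else j
        with hggdef
      have hgg1 : ∀ i ∈ (rmap e Cs j x).support, i ∈ Cs (gg i) := by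
        intro i hi
        rw [hggdef]
        simp only [dif_pos (hchoice i hi)]
        exact (hchoice i hi).choose_spec.2
      have hgg2 : ∀ i ∈ (rmap e Cs j x).support, gg i < j := by
        intro i hi
        rw [hggdef]
        simp only [dif_pos (hchoice i hi)]
        exact (hchoice i hi).choose_spec.1
      obtain ⟨m, hmmem, hmsupp⟩ := hsub _ gg hgg1 hne
      obtain ⟨i, hi, rfl⟩ := Finset.mem_image.mp hmmem
      have hrx : rmap e Cs j x ∈ iSup (Nmod e Cs) := IH _ (hgg2 i hi) _ her hmsupp
      rw [hdec]
      exact Submodule.add_mem _ (le_iSup (Nmod e Cs) j hxN) hrx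
  rintro - ⟨y, rfl⟩
  by_cases hz : e y = 0
  · rw [hz]; exact Submodule.zero_mem _
  · have hne : (e y).support.Nonempty := Finsupp.support_nonempty_iff.mpr hz
    obtain ⟨m, _, hmsupp⟩ := hsub (e y) id (fun i _ => hmem i) hne
    exact key m _ (he y) hmsupp

end
end KapAux

/-- **Kaplansky's theorem.** Every projective module is a direct sum of countably
generated projective submodules. -/
theorem kaplansky_projective_directSum {R : Type u} [Ring R]
    {P : Type v} [AddCommGroup P] [Module R P] (hP : Module.Projective R P) :
    ∃ (ι : Type v) (N : ι → Submodule R P),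
      iSupIndep N ∧ iSup N = ⊤ ∧
      ∀ i, (∃ s : Set P, s.Countable ∧ Submodule.span R s = N i) ∧
        Module.Projective R (N i) := by
  classical
  obtain ⟨s, hs⟩ := hP.out
  obtain ⟨lo, wo⟩ := exists_wellOrder P
  set e : (P →₀ R) →ₗ[R] (P →₀ R) := s ∘ₗ Finsupp.linearCombination R (id : P → P)
    with hedef
  have he : ∀ x, e (e x) = e x := fun x => by
    simp only [hedef, LinearMap.comp_apply]
    exact congrArg s (hs _)
  have hrange : LinearMap.range e = LinearMap.range s := by
    apply le_antisymm
    · rintro - ⟨y, rfl⟩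
      exact ⟨_, rfl⟩
    · rintro - ⟨p, rfl⟩
      refine ⟨s p, ?_⟩
      simp only [hedef, LinearMap.comp_apply]
      exact congrArg s (hs p)
  choose Cs hmem hcnt hgood using fun j => KapAux.exists_countable_good e j
  set N := KapAux.Nmod e Cs with hNdef
  have hindep : iSupIndep N := KapAux.Nmod_indep he
  have hsup : iSup N = LinearMap.range s := by
    rw [hNdef, KapAux.Nmod_sup he hmem hgood, hrange]
  have hNle : ∀ j, N j ≤ LinearMap.range s := fun j => hsup ▸ le_iSup N j
  have hinj : Function.Injective s := hs.injective
  have hmap : ∀ j, Submodule.map s (Submodule.comap s (N j)) = N j := fun j => by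
    rw [Submodule.map_comap_eq, inf_eq_right.mpr (hNle j)]
  have hmapinj : Function.Injective (Submodule.map s) :=
    Submodule.map_injective_of_injective hinj
  refine ⟨P, fun j => Submodule.comap s (N j), ?_, ?_, ?_⟩
  · intro j
    rw [disjoint_iff]
    apply hmapinj
    rw [Submodule.map_bot, Submodule.map_inf _ hinj]
    simp_rw [Submodule.map_iSup, hmap]
    exact disjoint_iff.mp (hindep j)
  · apply hmapinj
    rw [Submodule.map_iSup, Submodule.map_top]
    simp_rw [hmap]
    rw [hsup, LinearMap.range_eq_map]
  · intro j
    haveI : Module.Projective R (N j) := KapAux.Nmod_projective he hgood j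
    constructor
    · refine ⟨s ⁻¹' ((fun i => KapAux.umap e Cs j (Finsupp.single i (1 : R))) '' Cs j),
        ((hcnt j).image _).preimage hinj, ?_⟩
      apply hmapinj
      rw [Submodule.map_span, Set.image_preimage_eq_inter_range]
      have hss : ((fun i => KapAux.umap e Cs j (Finsupp.single i (1 : R))) '' Cs j)
          ∩ Set.range s = (fun i => KapAux.umap e Cs j (Finsupp.single i (1 : R))) '' Cs j := by
        apply Set.inter_eq_self_of_subset_left
        rintro - ⟨i, hi, rfl⟩
        obtain ⟨y, hy⟩ := hNle j (KapAux.umap_mem he hgood j (Finsupp.single i 1))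
        exact ⟨y, hy⟩
      rw [hss, KapAux.Nmod_span he hgood j, hmap]
    · exact Module.Projective.of_equiv
        (((Submodule.equivMapOfInjective s hinj (Submodule.comap s (N j))).trans
          (LinearEquiv.ofEq _ _ (hmap j))).symm)
end

section
/- (Schanuel's Lemma, projective version) Let R be a ring and M an R-module. Suppose 0 → K →i P →p M → 0 and 0 → K' →i' P' →p' M → 0 are short exact sequences of R-modules (i, i' injective, p, p' surjective, range i = ker p, range i' = ker p') in which P and P' are projective. Then K × P' is R-linearly isomorphic to K' × P. -/
set_option synthInstance.maxHeartbeats 1000000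
set_option maxHeartbeats 1000000

/-- Splitting lemma: a surjection onto a projective module splits, so the
domain is isomorphic to `ker f × P`. -/
theorem schanuel_aux_split {R X P : Type*} [Ring R]
    [AddCommGroup X] [AddCommGroup P] [Module R X] [Module R P]
    (hP : Module.Projective R P) (f : X →ₗ[R] P) (hf : Function.Surjective f) :
    Nonempty (X ≃ₗ[R] (LinearMap.ker f × P)) := by
  obtain ⟨s, hs⟩ := Module.projective_lifting_property f LinearMap.id hf
  have hfs : ∀ q, f (s q) = q := fun q => LinearMap.congr_fun hs q
  refine ⟨{ toFun := fun x => (⟨x - s (f x), by simp [LinearMap.mem_ker, hfs]⟩, f x)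
            invFun := fun kq => kq.1.1 + s kq.2
            map_add' := ?_
            map_smul' := ?_
            left_inv := ?_
            right_inv := ?_ }⟩
  · intro x y
    ext <;> simp <;> abel
  · intro c x
    ext <;> simp [smul_sub]
  · intro x; simp
  · rintro ⟨⟨k, hk⟩, q⟩
    have hk0 : f k = 0 := hk
    ext <;> simp [hfs, hk0]

/-- **Schanuel's Lemma (projective version).** Given short exact sequences
`0 → K → P → M → 0` and `0 → K' → P' → M → 0` with `P`, `P'` projective,
we have `K × P' ≅ K' × P`. -/
theorem schanuel_projective {R : Type*} [Ring R]
    {M K P K' P' : Type*}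
    [AddCommGroup M] [AddCommGroup K] [AddCommGroup P] [AddCommGroup K'] [AddCommGroup P']
    [Module R M] [Module R K] [Module R P] [Module R K'] [Module R P']
    (hP : Module.Projective R P) (hP' : Module.Projective R P')
    (i : K →ₗ[R] P) (p : P →ₗ[R] M)
    (i' : K' →ₗ[R] P') (p' : P' →ₗ[R] M)
    (hi : Function.Injective i) (hp : Function.Surjective p)
    (hip : LinearMap.range i = LinearMap.ker p)
    (hi' : Function.Injective i') (hp' : Function.Surjective p')
    (hip' : LinearMap.range i' = LinearMap.ker p') :
    Nonempty ((K × P') ≃ₗ[R] (K' × P)) := by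
  classical
  -- the pullback
  set g : (P × P') →ₗ[R] M :=
    p.comp (LinearMap.fst R P P') - p'.comp (LinearMap.snd R P P') with hg
  set X : Submodule R (P × P') := LinearMap.ker g with hX
  have memX : ∀ a b, (a, b) ∈ X ↔ p a = p' b := by
    intro a b
    simp [hX, hg, LinearMap.mem_ker, sub_eq_zero]
  set f : X →ₗ[R] P := (LinearMap.fst R P P').comp X.subtype with hf
  set f' : X →ₗ[R] P' := (LinearMap.snd R P P').comp X.subtype with hf'
  have hfs : Function.Surjective f := by
    intro a
    obtain ⟨b, hb⟩ := hp' (p a)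
    exact ⟨⟨(a, b), (memX a b).2 hb.symm⟩, rfl⟩
  have hfs' : Function.Surjective f' := by
    intro b
    obtain ⟨a, ha⟩ := hp (p' b)
    exact ⟨⟨(a, b), (memX a b).2 ha⟩, rfl⟩
  obtain ⟨e1⟩ := schanuel_aux_split hP f hfs
  obtain ⟨e2⟩ := schanuel_aux_split hP' f' hfs'
  -- K' ≃ ker f
  have memK' : ∀ (c : K'), ((0 : P), i' c) ∈ X := by
    intro c
    rw [memX]
    have : i' c ∈ LinearMap.ker p' := hip' ▸ LinearMap.mem_range_self i' c
    simp [LinearMap.mem_ker.1 this]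
  let jK' : K' →ₗ[R] LinearMap.ker f :=
    { toFun := fun c => ⟨⟨((0 : P), i' c), memK' c⟩, by simp [LinearMap.mem_ker, hf]⟩
      map_add' := by intro x y; ext <;> simp
      map_smul' := by intro r x; ext <;> simp }
  have hjK' : Function.Bijective jK' := by
    constructor
    · intro x y hxy
      apply hi'
      have := congrArg (fun z : ↥(LinearMap.ker f) => ((z : X) : P × P').2) hxy
      simpa [jK'] using this
    · rintro ⟨⟨⟨a, b⟩, hab⟩, hker⟩
      have ha : a = 0 := hker
      have hb : b ∈ LinearMap.ker p' := by
        rw [LinearMap.mem_ker]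
        have := (memX a b).1 hab
        rw [ha] at this; simpa using this.symm
      obtain ⟨c, hc⟩ := (hip' ▸ hb : b ∈ LinearMap.range i')
      refine ⟨c, ?_⟩
      ext <;> simp [jK', ha, hc]
  -- K ≃ ker f'
  have memK : ∀ (c : K), (i c, (0 : P')) ∈ X := by
    intro c
    rw [memX]
    have : i c ∈ LinearMap.ker p := hip ▸ LinearMap.mem_range_self i c
    simp [LinearMap.mem_ker.1 this]
  let jK : K →ₗ[R] LinearMap.ker f' :=
    { toFun := fun c => ⟨⟨(i c, (0 : P')), memK c⟩, by simp [LinearMap.mem_ker, hf']⟩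
      map_add' := by intro x y; ext <;> simp
      map_smul' := by intro r x; ext <;> simp }
  have hjK : Function.Bijective jK := by
    constructor
    · intro x y hxy
      apply hi
      have := congrArg (fun z : ↥(LinearMap.ker f') => ((z : X) : P × P').1) hxy
      simpa [jK] using this
    · rintro ⟨⟨⟨a, b⟩, hab⟩, hker⟩
      have hb : b = 0 := hker
      have ha : a ∈ LinearMap.ker p := by
        rw [LinearMap.mem_ker]
        have := (memX a b).1 hab
        rw [hb] at this; simpa using this
      obtain ⟨c, hc⟩ := (hip ▸ ha : a ∈ LinearMap.range i)
      refine ⟨c, ?_⟩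
      ext <;> simp [jK, hb, hc]
  let eK' : K' ≃ₗ[R] LinearMap.ker f := LinearEquiv.ofBijective jK' hjK'
  let eK : K ≃ₗ[R] LinearMap.ker f' := LinearEquiv.ofBijective jK hjK
  exact ⟨(LinearEquiv.prodCongr eK (LinearEquiv.refl R P')).trans <|
    e2.symm.trans <| e1.trans <| LinearEquiv.prodCongr eK'.symm (LinearEquiv.refl R P)⟩
end

section
/- Let R be a commutative ring and let A →f B →g C be R-linear maps. The sequence is exact at B (i.e. range f = ker g) if and only if the induced sequence of character modules C⁺ →g⁺ B⁺ →f⁺ A⁺ is exact at B⁺, where g⁺(φ) = φ ∘ g and f⁺(ψ) = ψ ∘ f. -/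
/-- Any character of `B` vanishing on `ker g` factors through `g`. -/
lemma characterModule_factor_aux {R : Type*} [CommRing R]
    {B C : Type*} [AddCommGroup B] [AddCommGroup C]
    [Module R B] [Module R C]
    (g : B →ₗ[R] C) (ψ : CharacterModule B)
    (hψ : ∀ b ∈ LinearMap.ker g, ψ b = 0) :
    ∃ χ : CharacterModule C, CharacterModule.dual g χ = ψ := by
  -- work over ℤ
  set gℤ : B →ₗ[ℤ] C := g.toAddMonoidHom.toIntLinearMap with hgℤ
  have hker : ∀ b, b ∈ LinearMap.ker gℤ → ψ b = 0 := fun b hb => hψ b hb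
  set ψ' : (B ⧸ LinearMap.ker gℤ) →ₗ[ℤ] AddCircle (1 : ℚ) :=
    Submodule.liftQ _ ψ.toIntLinearMap (fun b hb => hker b hb) with hψ'
  set e := gℤ.quotKerEquivRange with he
  set χ₀ : CharacterModule (LinearMap.range gℤ) :=
    (ψ' ∘ₗ (e.symm : LinearMap.range gℤ →ₗ[ℤ] B ⧸ LinearMap.ker gℤ)).toAddMonoidHom with hχ₀
  obtain ⟨χ, hχ⟩ := CharacterModule.dual_surjective_of_injective
    (LinearMap.range gℤ).subtype (Submodule.injective_subtype _) χ₀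
  refine ⟨χ, ?_⟩
  ext b
  have hb : g b ∈ LinearMap.range gℤ := ⟨b, rfl⟩
  have h1 : χ (g b) = χ₀ ⟨g b, hb⟩ := by
    have h0 : (CharacterModule.dual (LinearMap.range gℤ).subtype χ) ⟨g b, hb⟩
        = χ₀ ⟨g b, hb⟩ := congr_fun (congrArg DFunLike.coe hχ) ⟨g b, hb⟩
    exact h0
  have h2 : e.symm ⟨g b, hb⟩ = Submodule.Quotient.mk b := by
    apply e.injective
    rw [LinearEquiv.apply_symm_apply]
    exact Subtype.ext (gℤ.quotKerEquivRange_apply_mk b).symm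
  calc (CharacterModule.dual g χ) b = χ (g b) := rfl
    _ = χ₀ ⟨g b, hb⟩ := h1
    _ = ψ' (e.symm ⟨g b, hb⟩) := rfl
    _ = ψ' (Submodule.Quotient.mk b) := by rw [h2]
    _ = ψ b := rfl

/-- A sequence `A →f B →g C` of `R`-linear maps is exact at `B` if and only if
the induced sequence of character modules `C⁺ →g⁺ B⁺ →f⁺ A⁺` is exact at `B⁺`. -/
theorem exact_iff_characterModule_exact {R : Type*} [CommRing R]
    {A B C : Type*} [AddCommGroup A] [AddCommGroup B] [AddCommGroup C]
    [Module R A] [Module R B] [Module R C]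
    (f : A →ₗ[R] B) (g : B →ₗ[R] C) :
    LinearMap.range f = LinearMap.ker g ↔
      LinearMap.range (CharacterModule.dual g) = LinearMap.ker (CharacterModule.dual f) := by
  constructor
  · intro h
    apply le_antisymm
    · rintro ψ ⟨χ, rfl⟩
      rw [LinearMap.mem_ker]
      ext a
      have hfa : f a ∈ LinearMap.ker g := h ▸ LinearMap.mem_range_self f a
      exact (congrArg χ (LinearMap.mem_ker.mp hfa)).trans (map_zero χ)
    · intro ψ hψ
      obtain ⟨χ, hχ⟩ := characterModule_factor_aux g ψ (fun b hb => by
        rw [← h] at hb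
        obtain ⟨a, rfl⟩ := hb
        exact congr_fun (congrArg DFunLike.coe (LinearMap.mem_ker.mp hψ)) a)
      exact ⟨χ, hχ⟩
  · intro h
    apply le_antisymm
    · rintro _ ⟨a, rfl⟩
      rw [LinearMap.mem_ker]
      apply CharacterModule.eq_zero_of_character_apply
      intro c
      have : CharacterModule.dual g c ∈ LinearMap.ker (CharacterModule.dual f) :=
        h ▸ LinearMap.mem_range_self _ c
      exact congr_fun (congrArg DFunLike.coe (LinearMap.mem_ker.mp this)) a
    · intro b hb
      by_contra hbn
      have hmk : (Submodule.Quotient.mk b : B ⧸ LinearMap.range f) ≠ 0 := by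
        simpa [Submodule.Quotient.mk_eq_zero] using hbn
      obtain ⟨c, hc⟩ := CharacterModule.exists_character_apply_ne_zero_of_ne_zero hmk
      set ψ := CharacterModule.dual (LinearMap.range f).mkQ c with hψdef
      have hψker : ψ ∈ LinearMap.ker (CharacterModule.dual f) := by
        rw [LinearMap.mem_ker]
        ext a
        have : (LinearMap.range f).mkQ (f a) = 0 := by
          simp [Submodule.Quotient.mk_eq_zero]
        exact (congrArg c this).trans (map_zero c)
      rw [← h] at hψker
      obtain ⟨χ, hχ⟩ := hψker
      have : ψ b = 0 := by
        have h0 : g b = 0 := LinearMap.mem_ker.mp hb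
        have := congr_fun (congrArg DFunLike.coe hχ) b
        rw [← this]
        exact (congrArg χ h0).trans (map_zero χ)
      exact hc this
end

section
/- (Eckmann–Schöpf) Let R be a ring and M an R-module. Then M has an injective envelope: there exist an injective R-module E and an injective R-linear map α : M → E whose image is essential in E, i.e. every nonzero submodule N of E satisfies N ⊓ range(α) ≠ 0. -/
universe u v

open CategoryTheory

/-- **Eckmann–Schöpf.** Every module has an injective envelope: there is an
injective module `E` and an injective linear map `α : M → E` whose image is an
essential submodule of `E`. -/
theorem exists_injective_envelope (R : Type u) [Ring R]
    (M : Type v) [AddCommGroup M] [Module R M] :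
    ∃ (E : Type (max u v)) (_ : AddCommGroup E) (_ : Module R E),
      Module.Injective R E ∧
      ∃ α : M →ₗ[R] E, Function.Injective α ∧
        ∀ N : Submodule R E, N ≠ ⊥ → N ⊓ LinearMap.range α ≠ ⊥ := by
  classical
  -- Step 1: embed `M` into an injective module `Q`.
  letI : EnoughInjectives (ModuleCat.{max u v} R) := ModuleCat.enoughInjectives.{v, u} R
  let M' : ModuleCat.{max u v} R := ModuleCat.of R (ULift.{u} M)
  let QM : ModuleCat.{max u v} R := Injective.under M'
  let Q : Type (max u v) := QM.carrier
  letI : AddCommGroup Q := QM.isAddCommGroup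
  letI : Module R Q := QM.isModule
  haveI hQinj : Module.Injective R Q := by
    haveI : CategoryTheory.Injective (ModuleCat.of R Q) :=
      inferInstanceAs (CategoryTheory.Injective QM)
    exact Module.injective_module_of_injective_object R Q
  let i0 : ULift.{u} M →ₗ[R] Q := (Injective.ι M').hom
  have hi0 : Function.Injective i0 :=
    (ModuleCat.mono_iff_injective (Injective.ι M')).mp inferInstance
  let i : M →ₗ[R] Q := i0 ∘ₗ (ULift.moduleEquiv.symm : M ≃ₗ[R] ULift.{u} M).toLinearMap
  have hi : Function.Injective i := by
    intro a b hab
    exact ULift.moduleEquiv.symm.injective (hi0 hab)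
  -- Step 2: Zorn, find a maximal essential extension `E` of `range i` inside `Q`.
  let S : Set (Submodule R Q) := {E | LinearMap.range i ≤ E ∧
    ∀ N : Submodule R Q, N ≤ E → N ≠ ⊥ → N ⊓ LinearMap.range i ≠ ⊥}
  have hrS : LinearMap.range i ∈ S := by
    refine ⟨le_rfl, fun N hN hN0 => ?_⟩
    rwa [inf_eq_left.mpr hN]
  obtain ⟨E, -, hES, hEmax⟩ := zorn_le_nonempty₀ S (fun c hcS hchain y hy => by
    refine ⟨sSup c, ⟨?_, ?_⟩, fun z hz => le_sSup hz⟩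
    · exact le_trans (hcS hy).1 (le_sSup hy)
    · intro N hN hN0
      obtain ⟨x, hxN, hx0⟩ := Submodule.ne_bot_iff N |>.mp hN0
      obtain ⟨F, hFc, hxF⟩ :=
        (Submodule.mem_sSup_of_directed ⟨y, hy⟩ hchain.directedOn).mp (hN hxN)
      have hspan : Submodule.span R {x} ⊓ LinearMap.range i ≠ ⊥ := by
        refine (hcS hFc).2 _ ?_ ?_
        · rwa [Submodule.span_singleton_le_iff_mem]
        · simpa [Submodule.span_singleton_eq_bot] using hx0
      intro h
      refine hspan (le_bot_iff.mp ?_)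
      rw [← h]
      exact inf_le_inf_right _ (by rwa [Submodule.span_singleton_le_iff_mem]))
    (LinearMap.range i) hrS
  -- Step 3: Zorn, find `C` maximal with `C ⊓ E = ⊥`.
  let T : Set (Submodule R Q) := {C | C ⊓ E = ⊥}
  obtain ⟨C, -, hCT, hCmax⟩ := zorn_le_nonempty₀ T (fun c hcT hchain y hy => by
    refine ⟨sSup c, show sSup c ⊓ E = ⊥ from ?_, fun z hz => le_sSup hz⟩
    rw [eq_bot_iff]
    rintro x ⟨hx1, hx2⟩
    obtain ⟨F, hFc, hxF⟩ :=
      (Submodule.mem_sSup_of_directed ⟨y, hy⟩ hchain.directedOn).mp hx1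
    have : x ∈ F ⊓ E := ⟨hxF, hx2⟩
    rw [hcT hFc] at this
    exact this) ⊥ (by simp [T])
  -- e : E → Q/C is injective with essential range
  let e : ↥E →ₗ[R] Q ⧸ C := C.mkQ ∘ₗ E.subtype
  have he : Function.Injective e := by
    rw [← LinearMap.ker_eq_bot, eq_bot_iff]
    intro x hx
    have hx0 : Submodule.Quotient.mk (p := C) (x : Q) = 0 := hx
    have hC : (x : Q) ∈ C := (Submodule.Quotient.mk_eq_zero C).mp hx0
    have hmem : (x : Q) ∈ C ⊓ E := ⟨hC, x.2⟩
    rw [hCT] at hmem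
    exact Submodule.mem_bot R |>.mpr (Subtype.ext (by simpa using hmem))
  set P : Submodule R (Q ⧸ C) := LinearMap.range e with hP
  have hPess : ∀ N : Submodule R (Q ⧸ C), N ≠ ⊥ → N ⊓ P ≠ ⊥ := by
    intro N hN0
    obtain ⟨xb, hxbN, hxb0⟩ := Submodule.ne_bot_iff N |>.mp hN0
    obtain ⟨x, rfl⟩ := Submodule.mkQ_surjective C xb
    have hxC : x ∉ C := fun h => hxb0 ((Submodule.Quotient.mk_eq_zero C).mpr h)
    -- N' = preimage of N, strictly contains C
    have hNE : (N.comap C.mkQ) ⊓ E ≠ ⊥ := by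
      intro h
      have hCN : C ≤ N.comap C.mkQ := fun c hc => by
        have : C.mkQ c = 0 := (Submodule.Quotient.mk_eq_zero C).mpr hc
        simp [Submodule.mem_comap, this, N.zero_mem]
      have := hCmax (show _ ∈ T from h) hCN
      exact hxC (this hxbN)
    obtain ⟨z, ⟨hzN, hzE⟩, hz0⟩ := Submodule.ne_bot_iff _ |>.mp hNE
    rw [Submodule.ne_bot_iff]
    refine ⟨C.mkQ z, ⟨hzN, ⟨⟨z, hzE⟩, rfl⟩⟩, fun h => ?_⟩
    have : z ∈ C ⊓ E := ⟨(Submodule.Quotient.mk_eq_zero C).mp h, hzE⟩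
    rw [hCT] at this
    exact hz0 this
  -- extend the inverse of `e` to a map `h : Q/C → Q`
  let equiv : ↥E ≃ₗ[R] ↥P := LinearEquiv.ofInjective e he
  obtain ⟨h, hh⟩ := hQinj.out P.subtype (Submodule.injective_subtype P)
    (E.subtype ∘ₗ (equiv.symm : ↥P →ₗ[R] ↥E))
  have hhe : ∀ x : ↥E, h (e x) = (x : Q) := by
    intro x
    have h2 := hh (equiv x)
    have h1 : P.subtype (equiv x) = e x := LinearEquiv.ofInjective_apply (f := e) (h := he) x
    rw [h1] at h2
    rw [h2]
    simp
  have hhP : ∀ y : ↥P, h (y : Q ⧸ C) ∈ E := by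
    intro y
    have h2 : h (y : Q ⧸ C) = ((equiv.symm y : ↥E) : Q) := hh y
    rw [h2]
    exact (equiv.symm y).2
  have hhinj : Function.Injective h := by
    rw [← LinearMap.ker_eq_bot]
    by_contra hker
    obtain ⟨z, ⟨hz1, hz2⟩, hz0⟩ := Submodule.ne_bot_iff _ |>.mp (hPess _ hker)
    obtain ⟨x, rfl⟩ := hz2
    have : (x : Q) = 0 := by rw [← hhe x]; exact hz1
    exact hz0 (by rw [show x = 0 from Subtype.ext this]; simp)
  let r : Q →ₗ[R] Q := h ∘ₗ C.mkQ
  have hrE : ∀ x ∈ E, r x = x := fun x hx => hhe ⟨x, hx⟩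
  have hEr : E ≤ LinearMap.range r := fun x hx => ⟨x, hrE x hx⟩
  -- range r is an essential extension of range i, so by maximality it equals E
  have hrange : LinearMap.range r = E := by
    refine le_antisymm (hEmax ⟨le_trans hES.1 hEr, ?_⟩ hEr) hEr
    intro N hN hN0
    -- first show N ⊓ E ≠ ⊥
    have hNE : N ⊓ E ≠ ⊥ := by
      obtain ⟨z, hzN, hz0⟩ := Submodule.ne_bot_iff N |>.mp hN0
      obtain ⟨w, hw⟩ := hN hzN
      have hw0 : Submodule.span R {C.mkQ w} ≠ ⊥ := by
        rw [Ne, Submodule.span_singleton_eq_bot]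
        intro h0
        exact hz0 (by rw [← hw, show r w = h (C.mkQ w) from rfl, h0, map_zero])
      obtain ⟨y, ⟨hy1, hy2⟩, hy0⟩ := Submodule.ne_bot_iff _ |>.mp (hPess _ hw0)
      obtain ⟨x, rfl⟩ := hy2
      rw [Submodule.ne_bot_iff]
      refine ⟨h (e x), ⟨?_, ?_⟩, ?_⟩
      · obtain ⟨c, hc⟩ := Submodule.mem_span_singleton.mp hy1
        have hcz : h (e x) = c • z := by
          rw [← hc, map_smul, show h (C.mkQ w) = r w from rfl, hw]
        rw [hcz]
        exact N.smul_mem c hzN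
      · rw [hhe x]; exact x.2
      · rw [hhe x]
        intro hx0
        exact hy0 (by rw [show x = (0 : ↥E) from Subtype.ext hx0, map_zero])
    have := hES.2 (N ⊓ E) inf_le_right hNE
    intro hcon
    refine this (le_bot_iff.mp ?_)
    rw [← hcon]
    exact inf_le_inf_right _ inf_le_left
  -- retraction of Q onto E
  let rE : Q →ₗ[R] ↥E := r.codRestrict E (fun x => hrange ▸ LinearMap.mem_range_self r x)
  -- E is injective
  haveI hEinj : Module.Injective R ↥E := by
    constructor
    intro X Y _ _ _ _ f hf g
    obtain ⟨G, hG⟩ := hQinj.out f hf (E.subtype ∘ₗ g)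
    refine ⟨rE ∘ₗ G, fun x => ?_⟩
    have : G (f x) = (g x : Q) := hG x
    simp only [LinearMap.comp_apply, this]
    exact Subtype.ext (hrE _ (g x).2)
  -- the envelope map
  let α : M →ₗ[R] ↥E := i.codRestrict E (fun m => hES.1 ⟨m, rfl⟩)
  refine ⟨↥E, inferInstance, inferInstance, hEinj, α, ?_, ?_⟩
  · intro a b hab
    exact hi (congrArg Subtype.val hab)
  · intro N hN0
    have hN'0 : N.map E.subtype ≠ ⊥ := by
      obtain ⟨x, hxN, hx0⟩ := Submodule.ne_bot_iff N |>.mp hN0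
      rw [Submodule.ne_bot_iff]
      exact ⟨x, ⟨x, hxN, rfl⟩, fun h => hx0 (Subtype.ext h)⟩
    obtain ⟨y, ⟨hy1, hy2⟩, hy0⟩ := Submodule.ne_bot_iff _ |>.mp
      (hES.2 (N.map E.subtype) (Submodule.map_subtype_le E N) hN'0)
    obtain ⟨x, hxN, rfl⟩ := hy1
    obtain ⟨m, hm⟩ := hy2
    rw [Submodule.ne_bot_iff]
    refine ⟨x, ⟨hxN, ⟨m, Subtype.ext hm⟩⟩, fun h => hy0 (by rw [h]; simp)⟩
end
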